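/- Let d ≥ 2, let P ⊆ ℝ^{d+1} be a two-dimensional linear subspace and γ = S^d ∩ P the corresponding great circle, and let ω ⊆ S^d be a measurable set whose closure is disjoint from γ. Then uniform observability of spherical harmonics from ω fails: for every constant C > 0 there exist a natural number k and a nonzero harmonic polynomial p ∈ ℂ[X₁, …, X_{d+1}], homogeneous of degree k, such that ∫_{S^d} |p(x)|² dσ(x) > C · ∫_ω |p(x)|² dσ(x). -/

import Mathlib

open MeasureTheory MvPolynomial Metric Set
open scoped Pointwise

lemma aux_pderiv_lin {n : ℕ} (a : Fin n → ℂ) (i : Fin n) :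
    pderiv i (∑ j, C (a j) * X j : MvPolynomial (Fin n) ℂ) = C (a i) := by
  rw [map_sum]
  simp [pderiv_C_mul, pderiv_X, Pi.single_apply]

lemma aux_harmonic {n : ℕ} (a : Fin n → ℂ) (hsum : ∑ i, (a i)^2 = 0) (k : ℕ) :
    ∑ i, pderiv i (pderiv i ((∑ j, C (a j) * X j : MvPolynomial (Fin n) ℂ) ^ k)) = 0 := by
  set q : MvPolynomial (Fin n) ℂ := ∑ j, C (a j) * X j with hq
  match k with
  | 0 => simp
  | 1 => simp only [pow_one, hq, aux_pderiv_lin, pderiv_C]; simp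
  | (m+2) =>
    have h2 : ∀ i, pderiv i (pderiv i (q^(m+2)))
        = ((m+2 : ℕ) : MvPolynomial (Fin n) ℂ) * ((m+1 : ℕ) : MvPolynomial (Fin n) ℂ)
          * q^m * (C (a i))^2 := by
      intro i
      rw [pderiv_pow, aux_pderiv_lin, pderiv_mul, pderiv_C, mul_zero, add_zero,
        pderiv_mul, Derivation.map_natCast, zero_mul, zero_add, pderiv_pow, aux_pderiv_lin]
      have hm2 : m + 2 - 1 = m + 1 := by omega
      have hm1 : m + 1 - 1 = m := by omega
      rw [hm2, hm1]
      ring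
    simp only [h2]
    rw [← Finset.mul_sum]
    have : ∑ i, (C (a i) : MvPolynomial (Fin n) ℂ)^2 = 0 := by
      simp only [← map_pow, ← map_sum, hsum, map_zero]
    rw [this, mul_zero]

lemma aux_toSphere_pos {n : ℕ} (U : Set (Metric.sphere (0 : EuclideanSpace ℝ (Fin (n+1))) 1))
    (hU : IsOpen U) (hne : U.Nonempty) :
    0 < (volume : Measure (EuclideanSpace ℝ (Fin (n+1)))).toSphere U := by
  set E := EuclideanSpace ℝ (Fin (n+1))
  obtain ⟨V, hV, hVU⟩ := isOpen_induced_iff.mp hU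
  set g : E → E := fun y => ‖y‖⁻¹ • y with hg
  set B : Set E := ({(0 : E)}ᶜ ∩ g ⁻¹' V) ∩ (‖·‖) ⁻¹' Set.Iio (1 : ℝ) with hB
  have hgc : ContinuousOn g ({(0:E)}ᶜ) := by
    apply ContinuousOn.smul (f := fun y : E => ‖y‖⁻¹) _ continuousOn_id
    exact ContinuousOn.inv₀ continuous_norm.continuousOn (fun x hx => by
      exact norm_ne_zero_iff.mpr hx)
  have hBo : IsOpen B := by
    apply IsOpen.inter _ (isOpen_Iio.preimage continuous_norm)
    exact hgc.isOpen_inter_preimage (isOpen_compl_singleton) hV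
  have hBne : B.Nonempty := by
    obtain ⟨x, hx⟩ := hne
    have hx1 : ‖(x : E)‖ = 1 := by simpa [mem_sphere_iff_norm] using x.2
    have hx0 : (x : E) ≠ 0 := by intro h; rw [h] at hx1; simp at hx1
    have h0 : ((1/2 : ℝ) • (x : E)) ≠ 0 := smul_ne_zero (by norm_num) hx0
    have hxV : (x : E) ∈ V := by rw [← hVU] at hx; exact hx
    have hgx : g ((1/2 : ℝ) • (x : E)) = (x : E) := by
      show ‖(1/2 : ℝ) • (x : E)‖⁻¹ • ((1/2 : ℝ) • (x : E)) = (x : E)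
      rw [norm_smul, hx1, mul_one, smul_smul, Real.norm_eq_abs]
      have h12 : (|1/2|⁻¹ * (1/2) : ℝ) = 1 := by
        rw [abs_of_pos (by norm_num : (0:ℝ) < 1/2)]; norm_num
      rw [h12, one_smul]
    have hlt : ((1/2 : ℝ) • (x : E)) ∈ (‖·‖) ⁻¹' Set.Iio (1:ℝ) := by
      simp only [Set.mem_preimage, Set.mem_Iio, norm_smul, hx1, mul_one, Real.norm_eq_abs]
      rw [abs_of_pos (by norm_num : (0:ℝ) < 1/2)]; norm_num
    exact ⟨_, ⟨⟨h0, by rw [Set.mem_preimage, hgx]; exact hxV⟩, hlt⟩⟩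
  have hBsub : B ⊆ Set.Ioo (0:ℝ) 1 • (Subtype.val '' U : Set E) := by
    rintro y ⟨⟨hy0, hyV⟩, hy1⟩
    have hy0' : y ≠ 0 := hy0
    have hny : 0 < ‖y‖ := norm_pos_iff.mpr hy0'
    have hmem : g y ∈ Metric.sphere (0:E) 1 := by
      simp [hg, mem_sphere_iff_norm, norm_smul, abs_of_pos (inv_pos.mpr hny),
        inv_mul_cancel₀ hny.ne']
    have hy1' : ‖y‖ < 1 := hy1
    have hgU : (⟨g y, hmem⟩ : Metric.sphere (0:E) 1) ∈ U := by
      rw [← hVU]; exact hyV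
    refine ⟨‖y‖, ⟨hny, hy1'⟩, g y, ⟨⟨g y, hmem⟩, hgU, rfl⟩, ?_⟩
    show ‖y‖ • (‖y‖⁻¹ • y) = y
    rw [smul_smul, mul_inv_cancel₀ hny.ne', one_smul]
  rw [Measure.toSphere_apply' _ hU.measurableSet]
  have h1 : (0 : ENNReal) < volume (Set.Ioo (0:ℝ) 1 • (Subtype.val '' U : Set E)) :=
    lt_of_lt_of_le (hBo.measure_pos volume hBne) (measure_mono hBsub)
  have h2 : (Module.finrank ℝ E : ENNReal) ≠ 0 := by
    simp [E, finrank_euclideanSpace]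
  exact ENNReal.mul_pos h2 h1.ne'

theorem stmt_5 (d : ℕ) (hd : 2 ≤ d)
    (P : Submodule ℝ (EuclideanSpace ℝ (Fin (d + 1)))) (hP : Module.finrank ℝ P = 2)
    (ω : Set (Metric.sphere (0 : EuclideanSpace ℝ (Fin (d + 1))) 1))
    (hω : MeasurableSet ω)
    (hdisj : closure ω ∩
        {x : Metric.sphere (0 : EuclideanSpace ℝ (Fin (d + 1))) 1 |
          (x : EuclideanSpace ℝ (Fin (d + 1))) ∈ P} = ∅) :
    ∀ C : ℝ, 0 < C →
      ∃ (k : ℕ) (p : MvPolynomial (Fin (d + 1)) ℂ),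
        p ≠ 0
        ∧ (∑ i : Fin (d + 1), pderiv i (pderiv i p) = 0)
        ∧ p.IsHomogeneous k
        ∧ (∫ x : Metric.sphere (0 : EuclideanSpace ℝ (Fin (d + 1))) 1,
              ‖eval (fun i : Fin (d + 1) =>
                  (((x : EuclideanSpace ℝ (Fin (d + 1))) i : ℝ) : ℂ)) p‖ ^ 2
              ∂(volume : Measure (EuclideanSpace ℝ (Fin (d + 1)))).toSphere)
          > C * ∫ x in ω,
              ‖eval (fun i : Fin (d + 1) =>
                  (((x : EuclideanSpace ℝ (Fin (d + 1))) i : ℝ) : ℂ)) p‖ ^ 2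
              ∂(volume : Measure (EuclideanSpace ℝ (Fin (d + 1)))).toSphere := by
  intro C hC
  classical
  -- the canonical surface measure
  set σ := (volume : Measure (EuclideanSpace ℝ (Fin (d + 1)))).toSphere with hσ
  -- an orthonormal pair spanning (inside) P
  let e : Fin 2 → EuclideanSpace ℝ (Fin (d+1)) :=
    fun j => ((stdOrthonormalBasis ℝ P) (Fin.cast hP.symm j) : EuclideanSpace ℝ (Fin (d+1)))
  have heP : ∀ j, e j ∈ P := fun j => ((stdOrthonormalBasis ℝ P) (Fin.cast hP.symm j)).2
  have he : ∀ j l, (inner ℝ (e j) (e l) : ℝ) = if j = l then 1 else 0 := by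
    intro j l
    have h := orthonormal_iff_ite.mp (stdOrthonormalBasis ℝ P).orthonormal
      (Fin.cast hP.symm j) (Fin.cast hP.symm l)
    rw [Submodule.coe_inner] at h
    rw [show ((inner ℝ (e j) (e l) : ℝ)) = inner ℝ ((stdOrthonormalBasis ℝ P) (Fin.cast hP.symm j) : EuclideanSpace ℝ (Fin (d+1))) ((stdOrthonormalBasis ℝ P) (Fin.cast hP.symm l) : EuclideanSpace ℝ (Fin (d+1))) from rfl, h]
    simp [Fin.ext_iff]
  have h00 : (inner ℝ (e 0) (e 0) : ℝ) = 1 := by simpa using he 0 0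
  have h11 : (inner ℝ (e 1) (e 1) : ℝ) = 1 := by simpa using he 1 1
  have h01 : (inner ℝ (e 0) (e 1) : ℝ) = 0 := by simpa using he 0 1
  have h10 : (inner ℝ (e 1) (e 0) : ℝ) = 0 := by simpa using he 1 0
  -- the squared projection function
  set f : EuclideanSpace ℝ (Fin (d+1)) → ℝ :=
    fun v => (inner ℝ (e 0) v : ℝ)^2 + (inner ℝ (e 1) v : ℝ)^2 with hf
  have hfnn : ∀ v, 0 ≤ f v := fun v => by rw [hf]; positivity
  have hkey : ∀ v : EuclideanSpace ℝ (Fin (d+1)),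
      ‖v - ((inner ℝ (e 0) v : ℝ) • e 0 + (inner ℝ (e 1) v : ℝ) • e 1)‖^2 = ‖v‖^2 - f v := by
    intro v
    have expand : ∀ x : EuclideanSpace ℝ (Fin (d+1)), ‖x‖^2 = (inner ℝ x x : ℝ) :=
      fun x => (real_inner_self_eq_norm_sq x).symm
    rw [expand, expand]
    have hc0 : (inner ℝ v (e 0) : ℝ) = inner ℝ (e 0) v := real_inner_comm _ _
    have hc1 : (inner ℝ v (e 1) : ℝ) = inner ℝ (e 1) v := real_inner_comm _ _
    simp only [inner_sub_left, inner_sub_right, inner_add_left, inner_add_right,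
      real_inner_smul_left, real_inner_smul_right, h00, h11, h01, h10, hc0, hc1, hf]
    ring
  have hxn : ∀ x : Metric.sphere (0 : EuclideanSpace ℝ (Fin (d + 1))) 1,
      ‖(x : EuclideanSpace ℝ (Fin (d+1)))‖ = 1 := fun x => by
    simpa [mem_sphere_iff_norm] using x.2
  have hle1 : ∀ x : Metric.sphere (0 : EuclideanSpace ℝ (Fin (d + 1))) 1,
      f (x : EuclideanSpace ℝ (Fin (d+1))) ≤ 1 := by
    intro x
    have hh := hkey (x : EuclideanSpace ℝ (Fin (d+1)))
    rw [hxn x] at hh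
    nlinarith [sq_nonneg (‖(x : EuclideanSpace ℝ (Fin (d+1))) - ((inner ℝ (e 0) (x : EuclideanSpace ℝ (Fin (d+1))) : ℝ) • e 0 + (inner ℝ (e 1) (x : EuclideanSpace ℝ (Fin (d+1))) : ℝ) • e 1)‖)]
  have hlt1 : ∀ x ∈ closure ω, f (x : EuclideanSpace ℝ (Fin (d+1))) < 1 := by
    intro x hx
    have hxP : (x : EuclideanSpace ℝ (Fin (d+1))) ∉ P := by
      intro hxP
      have : x ∈ closure ω ∩ {y : Metric.sphere (0 : EuclideanSpace ℝ (Fin (d + 1))) 1 |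
          (y : EuclideanSpace ℝ (Fin (d+1))) ∈ P} := ⟨hx, hxP⟩
      rw [hdisj] at this
      exact this
    rcases lt_or_eq_of_le (hle1 x) with h | h
    · exact h
    · exfalso
      have hz := hkey (x : EuclideanSpace ℝ (Fin (d+1)))
      rw [hxn x, h] at hz
      simp only [one_pow, sub_self] at hz
      have hxy : (x : EuclideanSpace ℝ (Fin (d+1)))
          = (inner ℝ (e 0) (x : EuclideanSpace ℝ (Fin (d+1))) : ℝ) • e 0
            + (inner ℝ (e 1) (x : EuclideanSpace ℝ (Fin (d+1))) : ℝ) • e 1 := by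
        have hn0 := pow_eq_zero_iff (n := 2) (by norm_num) |>.mp hz
        rw [norm_eq_zero, sub_eq_zero] at hn0
        exact hn0
      apply hxP
      rw [hxy]
      exact P.add_mem (P.smul_mem _ (heP 0)) (P.smul_mem _ (heP 1))
  -- inner products as sums
  have hinner : ∀ w v : EuclideanSpace ℝ (Fin (d+1)), (inner ℝ w v : ℝ) = ∑ i, w i * v i := by
    intro w v
    simp [PiLp.inner_apply, RCLike.inner_apply, conj_trivial, mul_comm]
  -- the coefficients and polynomial data
  set a : Fin (d+1) → ℂ := fun i => ((e 0 i : ℝ) : ℂ) + Complex.I * ((e 1 i : ℝ) : ℂ) with ha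
  have hsum : ∑ i, (a i)^2 = 0 := by
    have hterm : ∀ i, (a i)^2 = ((e 0 i * e 0 i : ℝ) : ℂ) - ((e 1 i * e 1 i : ℝ) : ℂ)
        + (2*Complex.I) * ((e 0 i * e 1 i : ℝ) : ℂ) := by
      intro i
      rw [ha]
      push_cast
      linear_combination ((e 1 i : ℂ))^2 * Complex.I_sq
    have hs00 : ∑ i, e 0 i * e 0 i = 1 := by rw [← hinner, h00]
    have hs11 : ∑ i, e 1 i * e 1 i = 1 := by rw [← hinner, h11]
    have hs01 : ∑ i, e 0 i * e 1 i = 0 := by rw [← hinner, h01]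
    calc ∑ i, (a i)^2
        = ∑ i, (((e 0 i * e 0 i : ℝ) : ℂ) - ((e 1 i * e 1 i : ℝ) : ℂ)
            + (2*Complex.I) * ((e 0 i * e 1 i : ℝ) : ℂ)) :=
          Finset.sum_congr rfl (fun i _ => hterm i)
      _ = ((∑ i, e 0 i * e 0 i : ℝ) : ℂ) - ((∑ i, e 1 i * e 1 i : ℝ) : ℂ)
            + (2*Complex.I) * ((∑ i, e 0 i * e 1 i : ℝ) : ℂ) := by
          rw [Finset.sum_add_distrib, Finset.sum_sub_distrib, ← Finset.mul_sum]
          push_cast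
          ring
      _ = 0 := by rw [hs00, hs11, hs01]; simp
  set q : MvPolynomial (Fin (d+1)) ℂ := ∑ j, MvPolynomial.C (a j) * X j with hq
  have heval : ∀ v : EuclideanSpace ℝ (Fin (d+1)),
      eval (fun i => ((v i : ℝ) : ℂ)) q
        = ((inner ℝ (e 0) v : ℝ) : ℂ) + Complex.I * ((inner ℝ (e 1) v : ℝ) : ℂ) := by
    intro v
    rw [hq]
    have h1 : eval (fun i => ((v i : ℝ) : ℂ)) (∑ j, MvPolynomial.C (a j) * X j)
        = ∑ j, a j * ((v j : ℝ) : ℂ) := by simp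
    rw [h1]
    have hterm : ∀ j, a j * ((v j : ℝ) : ℂ)
        = ((e 0 j * v j : ℝ) : ℂ) + Complex.I * ((e 1 j * v j : ℝ) : ℂ) := by
      intro j; rw [ha]; push_cast; ring
    calc ∑ j, a j * ((v j : ℝ) : ℂ)
        = ∑ j, (((e 0 j * v j : ℝ) : ℂ) + Complex.I * ((e 1 j * v j : ℝ) : ℂ)) :=
          Finset.sum_congr rfl (fun j _ => hterm j)
      _ = ((∑ j, e 0 j * v j : ℝ) : ℂ) + Complex.I * ((∑ j, e 1 j * v j : ℝ) : ℂ) := by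
          rw [Finset.sum_add_distrib, ← Finset.mul_sum]
          push_cast
          ring
      _ = _ := by rw [← hinner, ← hinner]
  -- norm of evaluation
  have hnormeval : ∀ (k : ℕ) (v : EuclideanSpace ℝ (Fin (d+1))),
      ‖eval (fun i => ((v i : ℝ) : ℂ)) (q ^ k)‖ ^ 2 = (f v) ^ k := by
    intro k v
    rw [map_pow, norm_pow, ← pow_mul, mul_comm k 2, pow_mul, heval]
    congr 1
    rw [mul_comm Complex.I, Complex.sq_norm, Complex.normSq_add_mul_I, hf]
  -- nonvanishing
  have hqkne : ∀ k : ℕ, q ^ k ≠ 0 := by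
    intro k h
    have h2 : eval (fun i => ((e 0 i : ℝ) : ℂ)) (q ^ k) = 1 := by
      rw [map_pow, heval (e 0), h00, h10]
      simp
    rw [h, map_zero] at h2
    exact one_ne_zero h2.symm
  -- homogeneity
  have hq1 : q.IsHomogeneous 1 := by
    rw [hq]
    exact IsHomogeneous.sum _ _ _ (fun j _ => isHomogeneous_C_mul_X _ _)
  have hqk : ∀ k : ℕ, (q ^ k).IsHomogeneous k := fun k => by simpa using hq1.pow k
  -- harmonicity
  have hharm : ∀ k : ℕ, ∑ i, pderiv i (pderiv i (q ^ k)) = 0 := by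
    intro k
    rw [hq]
    exact aux_harmonic a hsum k
  -- continuity and integrability of the profile
  have hfc : Continuous f := by
    rw [hf]
    exact ((continuous_const.inner continuous_id).pow 2).add
      ((continuous_const.inner continuous_id).pow 2)
  have hGc : ∀ k : ℕ, Continuous (fun x : Metric.sphere (0 : EuclideanSpace ℝ (Fin (d + 1))) 1 =>
      (f (x : EuclideanSpace ℝ (Fin (d+1)))) ^ k) :=
    fun k => (hfc.comp continuous_subtype_val).pow k
  have hGint : ∀ k : ℕ, Integrable (fun x : Metric.sphere (0 : EuclideanSpace ℝ (Fin (d + 1))) 1 =>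
      (f (x : EuclideanSpace ℝ (Fin (d+1)))) ^ k) σ := by
    intro k
    refine (integrable_const (1:ℝ)).mono' (hGc k).aestronglyMeasurable ?_
    refine Filter.Eventually.of_forall (fun x => ?_)
    rw [Real.norm_eq_abs, abs_of_nonneg (pow_nonneg (hfnn _) _)]
    exact pow_le_one₀ (hfnn _) (hle1 x)
  -- a point of the sphere on the great circle
  have hsq : ‖e 0‖^2 = 1 := by rw [← real_inner_self_eq_norm_sq]; exact h00
  have he0n : ‖e 0‖ = 1 := by
    have hfac : (‖e 0‖ - 1) * (‖e 0‖ + 1) = 0 := by nlinarith [hsq]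
    rcases mul_eq_zero.mp hfac with h | h
    · linarith
    · linarith [norm_nonneg (e 0)]
  have he0mem : e 0 ∈ Metric.sphere (0 : EuclideanSpace ℝ (Fin (d+1))) 1 := by
    simp [mem_sphere_iff_norm, he0n]
  have hfe0 : f (e 0) = 1 := by
    show (inner ℝ (e 0) (e 0) : ℝ)^2 + (inner ℝ (e 1) (e 0) : ℝ)^2 = 1
    rw [h00, h10]; norm_num
  rcases Set.eq_empty_or_nonempty ω with hωe | hωne
  · -- ω is empty : take k = 0
    refine ⟨0, q ^ 0, hqkne 0, hharm 0, hqk 0, ?_⟩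
    subst hωe
    simp only [pow_zero, map_one, norm_one, one_pow, integral_const, measureReal_def, smul_eq_mul, mul_one,
      Measure.restrict_empty, Measure.coe_zero, Pi.zero_apply, ENNReal.toReal_zero, mul_zero]
    exact ENNReal.toReal_pos
      (aux_toSphere_pos Set.univ isOpen_univ ⟨⟨e 0, he0mem⟩, trivial⟩).ne'
      (measure_ne_top _ _)
  · -- ω nonempty
    have hclne : (closure ω).Nonempty := hωne.closure
    have hclc : IsCompact (closure ω) := isClosed_closure.isCompact
    obtain ⟨xm, hxm, hmax⟩ := hclc.exists_isMaxOn hclne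
      ((hfc.comp continuous_subtype_val).continuousOn)
    obtain ⟨r2, hr2⟩ : ∃ r : ℝ, r = f (xm : EuclideanSpace ℝ (Fin (d+1))) := ⟨_, rfl⟩
    have hr2nn : 0 ≤ r2 := by rw [hr2]; exact hfnn _
    have hr2lt : r2 < 1 := by rw [hr2]; exact hlt1 xm hxm
    obtain ⟨s2, hs2⟩ : ∃ s : ℝ, s = (r2 + 1)/2 := ⟨_, rfl⟩
    have hs2pos : 0 < s2 := by rw [hs2]; linarith
    have hr2s2 : r2 < s2 := by rw [hs2]; linarith
    have hs2lt1 : s2 < 1 := by rw [hs2]; linarith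
    set U : Set (Metric.sphere (0 : EuclideanSpace ℝ (Fin (d + 1))) 1) :=
      {x | s2 < f (x : EuclideanSpace ℝ (Fin (d+1)))} with hU
    have hUopen : IsOpen U := isOpen_lt continuous_const (hfc.comp continuous_subtype_val)
    have hUne : U.Nonempty := ⟨⟨e 0, he0mem⟩, by
      show s2 < f (e 0)
      rw [hfe0]; exact hs2lt1⟩
    obtain ⟨σU, hσU⟩ : ∃ x : ℝ, x = (σ U).toReal := ⟨_, rfl⟩
    obtain ⟨σω, hσω⟩ : ∃ x : ℝ, x = (σ ω).toReal := ⟨_, rfl⟩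
    have hσUpos : 0 < σU := by
      rw [hσU]
      exact ENNReal.toReal_pos (aux_toSphere_pos U hUopen hUne).ne' (measure_ne_top _ _)
    have hσωnn : 0 ≤ σω := by rw [hσω]; exact ENNReal.toReal_nonneg
    have hden : 0 < C * σω + 1 := by nlinarith
    obtain ⟨k, hk⟩ := exists_pow_lt_of_lt_one (div_pos hσUpos hden)
      ((div_lt_one hs2pos).mpr hr2s2)
    refine ⟨k, q ^ k, hqkne k, hharm k, hqk k, ?_⟩
    have hrw : ∀ x : Metric.sphere (0 : EuclideanSpace ℝ (Fin (d + 1))) 1,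
        ‖eval (fun i => (((x : EuclideanSpace ℝ (Fin (d + 1))) i : ℝ) : ℂ)) (q ^ k)‖ ^ 2
          = (f (x : EuclideanSpace ℝ (Fin (d+1)))) ^ k := fun x => hnormeval k _
    simp only [hrw]
    -- upper bound on ω
    have hub : (∫ x in ω, (f (x : EuclideanSpace ℝ (Fin (d+1)))) ^ k ∂σ) ≤ r2 ^ k * σω := by
      have hmono : ∀ x ∈ ω, (f (x : EuclideanSpace ℝ (Fin (d+1)))) ^ k ≤ r2 ^ k := by
        intro x hx
        rw [hr2]
        exact pow_le_pow_left₀ (hfnn _) (hmax (subset_closure hx)) k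
      calc (∫ x in ω, (f (x : EuclideanSpace ℝ (Fin (d+1)))) ^ k ∂σ)
          ≤ ∫ _x in ω, r2 ^ k ∂σ :=
            setIntegral_mono_on ((hGint k).integrableOn)
              (integrableOn_const (measure_lt_top _ _).ne) hω hmono
        _ = σω * r2 ^ k := by rw [setIntegral_const, smul_eq_mul, measureReal_def, ← hσω]
        _ = r2 ^ k * σω := mul_comm _ _
    -- lower bound over the whole sphere
    have hlb : s2 ^ k * σU ≤ ∫ x, (f (x : EuclideanSpace ℝ (Fin (d+1)))) ^ k ∂σ := by
      calc s2 ^ k * σU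
          ≤ ∫ x in U, (f (x : EuclideanSpace ℝ (Fin (d+1)))) ^ k ∂σ := by
            rw [hσU, mul_comm (s2 ^ k), ← smul_eq_mul, ← measureReal_def]
            refine setIntegral_ge_of_const_le hUopen.measurableSet (measure_ne_top _ _) ?_
              ((hGint k).integrableOn)
            intro x hx
            exact pow_le_pow_left₀ hs2pos.le (le_of_lt hx) k
        _ ≤ ∫ x, (f (x : EuclideanSpace ℝ (Fin (d+1)))) ^ k ∂σ :=
            setIntegral_le_integral (hGint k)
              (Filter.Eventually.of_forall (fun x => pow_nonneg (hfnn _) k))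
    -- arithmetic
    have hs2kpos : 0 < s2 ^ k := pow_pos hs2pos k
    have htnn : 0 ≤ (r2/s2) ^ k := pow_nonneg (div_nonneg hr2nn hs2pos.le) k
    rw [lt_div_iff₀ hden] at hk
    have h2 : C * σω * (r2/s2) ^ k < σU := by
      calc C * σω * (r2/s2) ^ k = (r2/s2) ^ k * (C * σω) := by ring
        _ ≤ (r2/s2) ^ k * (C * σω + 1) := by
            refine mul_le_mul_of_nonneg_left ?_ htnn
            linarith
        _ < σU := hk
    have hr2k : r2 ^ k = (r2/s2) ^ k * s2 ^ k := by
      rw [div_pow, div_mul_cancel₀]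
      exact hs2kpos.ne'
    have hstrict : C * (r2 ^ k * σω) < s2 ^ k * σU := by
      rw [hr2k]
      calc C * ((r2/s2) ^ k * s2 ^ k * σω) = (C * σω * (r2/s2) ^ k) * s2 ^ k := by ring
        _ < σU * s2 ^ k := mul_lt_mul_of_pos_right h2 hs2kpos
        _ = s2 ^ k * σU := mul_comm _ _
    have hCub : C * (∫ x in ω, (f (x : EuclideanSpace ℝ (Fin (d+1)))) ^ k ∂σ)
        ≤ C * (r2 ^ k * σω) := mul_le_mul_of_nonneg_left hub hC.le
    exact lt_of_le_of_lt hCub (lt_of_lt_of_le hstrict hlb)
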